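/- There is no highly composite number n whose largest prime factor p_r satisfies p_r ≥ 181 such that d(n) is also highly composite. -/

import Mathlib

/-- `d n`: number of positive divisors of `n`. -/
def d (n : ℕ) : ℕ := (Nat.divisors n).card

/-- A positive integer `n` is highly composite if every smaller positive
integer has strictly fewer divisors. -/
def HighlyComposite (n : ℕ) : Prop :=
  0 < n ∧ ∀ m : ℕ, 0 < m → m < n → d m < d n

/-! ### Auxiliary material -/

/-- `Om x` is the number of prime factors of `x` counted with multiplicity. -/
def Om (x : ℕ) : ℕ := x.factorization.sum fun _ k => k

lemma Om_eq_sum (x : ℕ) : Om x = ∑ q ∈ x.primeFactors, x.factorization q := by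
  rw [Om, Finsupp.sum, Nat.support_factorization]

lemma Om_mul {a b : ℕ} (ha : a ≠ 0) (hb : b ≠ 0) : Om (a * b) = Om a + Om b := by
  rw [Om, Om, Om, Nat.factorization_mul ha hb,
    Finsupp.sum_add_index' (fun _ => rfl) (fun _ _ _ => rfl)]

lemma Om_prod {s : Finset ℕ} {g : ℕ → ℕ} (hg : ∀ i ∈ s, g i ≠ 0) :
    Om (∏ i ∈ s, g i) = ∑ i ∈ s, Om (g i) := by
  induction s using Finset.cons_induction with
  | empty => simp [Om]
  | cons a s ha ih =>
    rw [Finset.prod_cons, Finset.sum_cons,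
      Om_mul (hg a (Finset.mem_cons_self a s))
        (Finset.prod_ne_zero_iff.2 fun i hi => hg i (Finset.mem_cons_of_mem hi)),
      ih fun i hi => hg i (Finset.mem_cons_of_mem hi)]

lemma one_le_Om {x : ℕ} (hx : 2 ≤ x) : 1 ≤ Om x := by
  obtain ⟨q, hq, hqd⟩ := Nat.exists_prime_and_dvd (by omega : x ≠ 1)
  have hx0 : x ≠ 0 := by omega
  have hmem : q ∈ x.primeFactors := Nat.mem_primeFactors.2 ⟨hq, hqd, hx0⟩
  have h1 : 1 ≤ x.factorization q := hq.factorization_pos_of_dvd hx0 hqd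
  calc 1 ≤ x.factorization q := h1
    _ ≤ ∑ r ∈ x.primeFactors, x.factorization r :=
        Finset.single_le_sum (fun r _ => Nat.zero_le _) hmem
    _ = Om x := (Om_eq_sum x).symm

lemma d_prime_pow {q : ℕ} (hq : q.Prime) (j : ℕ) : d (q ^ j) = j + 1 := by
  rw [d, Nat.divisors_prime_pow hq, Finset.card_map, Finset.card_range]

lemma d_pos {x : ℕ} (hx : x ≠ 0) : 0 < d x :=
  Finset.card_pos.2 ⟨x, Nat.mem_divisors_self x hx⟩

/-- Core swap lemma: in a highly composite number, if `q` divides `n` and the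
prime `P` doesn't, then `P ≥ q ^ ⌈v_q(n)/2⌉`. -/
lemma swap_bound {n q P : ℕ} (hn : HighlyComposite n) (hq : q.Prime) (hqn : q ∣ n)
    (hP : P.Prime) (hPn : ¬ P ∣ n) : q ^ ((n.factorization q + 1) / 2) ≤ P := by
  by_contra hlt
  push_neg at hlt
  have hn0 : n ≠ 0 := hn.1.ne'
  set v := n.factorization q with hv
  set k := (v + 1) / 2 with hk
  have hv1 : 1 ≤ v := hq.factorization_pos_of_dvd hn0 hqn
  have hkv : k ≤ v := by omega
  set n' := n / q ^ v with hn'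
  have hsplit : q ^ v * n' = n := Nat.ordProj_mul_ordCompl_eq_self n q
  have hn'0 : n' ≠ 0 := (Nat.ordCompl_pos q hn0).ne'
  have hqn' : ¬ q ∣ n' := Nat.not_dvd_ordCompl hq hn0
  have hqP : q ≠ P := fun h => hPn (h ▸ hqn)
  have hPn' : ¬ P ∣ n' := fun h => hPn (h.trans ⟨q ^ v, by rw [← hsplit]; ring⟩)
  set m := q ^ (v - k) * (P * n') with hm
  have hm0 : 0 < m := by
    have := hP.pos
    have := hq.pos
    positivity
  have hmlt : m < n := by
    rw [← hsplit]
    have h1 : q ^ v = q ^ (v - k) * q ^ k := by rw [← pow_add]; congr 1; omega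
    rw [h1, mul_assoc]
    have hstep : P * n' < q ^ k * n' :=
      mul_lt_mul_of_pos_right hlt (Nat.pos_of_ne_zero hn'0)
    exact mul_lt_mul_of_pos_left hstep (pow_pos hq.pos _)
  -- compute d m and d n
  have hcop1 : Nat.Coprime (q ^ (v - k)) (P * n') := by
    apply Nat.Coprime.pow_left
    exact Nat.Coprime.mul_right ((Nat.coprime_primes hq hP).2 hqP)
      ((hq.coprime_iff_not_dvd).2 hqn')
  have hcop2 : Nat.Coprime P n' := (hP.coprime_iff_not_dvd).2 hPn'
  have hcop3 : Nat.Coprime (q ^ v) n' :=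
    Nat.Coprime.pow_left _ ((hq.coprime_iff_not_dvd).2 hqn')
  have hdm : d m = (v - k + 1) * (2 * d n') := by
    rw [hm, d, hcop1.card_divisors_mul, hcop2.card_divisors_mul]
    rw [← d, ← d, ← d, d_prime_pow hq]
    have hdP : d P = 2 := by
      rw [d, Nat.Prime.divisors hP, Finset.card_pair hP.one_lt.ne]
    rw [hdP]
  have hdn : d n = (v + 1) * d n' := by
    conv_lhs => rw [← hsplit]
    rw [d, hcop3.card_divisors_mul, ← d, ← d, d_prime_pow hq]
  have hlarge : d n ≤ d m := by
    rw [hdm, hdn]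
    have h2 : v + 1 ≤ 2 * (v - k + 1) := by omega
    calc (v + 1) * d n' ≤ (2 * (v - k + 1)) * d n' :=
          Nat.mul_le_mul_right _ h2
      _ = (v - k + 1) * (2 * d n') := by ring
  exact absurd (hn.2 m hm0 hmlt) (by omega)

/-- Every prime below a prime factor of a highly composite number divides it. -/
lemma dvd_of_prime_le {n q r : ℕ} (hn : HighlyComposite n) (hq : q.Prime) (hqn : q ∣ n)
    (hr : r.Prime) (hrq : r ≤ q) : r ∣ n := by
  by_contra h
  have hb := swap_bound hn hq hqn hr h
  have hn0 : n ≠ 0 := hn.1.ne'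
  have hv1 : 1 ≤ n.factorization q := hq.factorization_pos_of_dvd hn0 hqn
  have hself : q ≤ q ^ ((n.factorization q + 1) / 2) :=
    Nat.le_self_pow (by omega) q
  have hrq' : q ≤ r := le_trans hself hb
  have heq : r = q := le_antisymm hrq hrq'
  exact h (heq ▸ hqn)

lemma pow_lt_helper {q k B e : ℕ} (hq : 1 < q) (h : q ^ k ≤ B) (hB : B < q ^ e) : k < e := by
  by_contra hc
  push_neg at hc
  exact absurd (le_trans (Nat.pow_le_pow_right (by omega) hc) h) (by omega)

lemma numeric_large (t : ℕ) (ht : 12 ≤ t) :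
    t * ((2 * t + 4) * (2 * Nat.log 2 (4 * t + 6)) + 1) < 2 ^ t := by
  rcases eq_or_lt_of_le ht with h | h
  · have hl : Nat.log 2 (4 * t + 6) = 5 := by
      rw [← h]
      exact Nat.log_eq_of_pow_le_of_lt_pow (by norm_num) (by norm_num)
    rw [hl, ← h]; norm_num
  rcases eq_or_lt_of_le (by omega : 13 ≤ t) with h13 | h13
  · have hl : Nat.log 2 (4 * t + 6) = 5 := by
      rw [← h13]
      exact Nat.log_eq_of_pow_le_of_lt_pow (by norm_num) (by norm_num)
    rw [hl, ← h13]; norm_num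
  have ht14 : 14 ≤ t := by omega
  -- log bound
  have hpow : ∀ s : ℕ, 14 ≤ s → 4 * s + 6 < 2 ^ (s - 2) := by
    intro s hs
    induction s, hs using Nat.le_induction with
    | base => norm_num
    | succ s hs' ih =>
      have h1 : 4 * (s + 1) + 6 ≤ 2 * (4 * s + 6) := by omega
      have h2 : 2 * (4 * s + 6) < 2 * 2 ^ (s - 2) := by omega
      have h3 : 2 * 2 ^ (s - 2) = 2 ^ (s + 1 - 2) := by
        rw [← pow_succ']
        congr 1
        omega
      omega
  have hlog : Nat.log 2 (4 * t + 6) ≤ t - 3 := by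
    have := Nat.log_lt_of_lt_pow (by omega : 4 * t + 6 ≠ 0) (hpow t ht14)
    omega
  have hcube : ∀ s : ℕ, 14 ≤ s → 4 * s ^ 3 < 2 ^ s := by
    intro s hs
    induction s, hs using Nat.le_induction with
    | base => norm_num
    | succ s hs' ih =>
      have h1 : 4 * (s + 1) ^ 3 ≤ 2 * (4 * s ^ 3) := by
        obtain ⟨u, rfl⟩ : ∃ u, s = u + 14 := ⟨s - 14, by omega⟩
        nlinarith [sq_nonneg u, pow_nonneg (Nat.zero_le u) 3]
      have h2 : 2 * (4 * s ^ 3) < 2 * 2 ^ s := by omega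
      have h3 : 2 * 2 ^ s = 2 ^ (s + 1) := by rw [pow_succ]; ring
      omega
  have h1 : t * ((2 * t + 4) * (2 * Nat.log 2 (4 * t + 6)) + 1) ≤
      t * ((2 * t + 4) * (2 * (t - 3)) + 1) := by
    apply Nat.mul_le_mul_left
    apply Nat.add_le_add_right
    apply Nat.mul_le_mul_left
    omega
  have h2 : t * ((2 * t + 4) * (2 * (t - 3)) + 1) ≤ 4 * t ^ 3 := by
    obtain ⟨u, rfl⟩ : ∃ u, t = u + 14 := ⟨t - 14, by omega⟩
    have hu : u + 14 - 3 = u + 11 := by omega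
    rw [hu]
    nlinarith [sq_nonneg u]
  calc t * ((2 * t + 4) * (2 * Nat.log 2 (4 * t + 6)) + 1) ≤ 4 * t ^ 3 := le_trans h1 h2
    _ < 2 ^ t := hcube t ht14

/-- No highly composite n whose largest prime factor is ≥ 181 has d(n)
highly composite. -/
theorem stmt_14 (n : ℕ) (hn : HighlyComposite n)
    (p : ℕ) (hp : p.Prime) (hpdvd : p ∣ n)
    (hmax : ∀ q : ℕ, q.Prime → q ∣ n → q ≤ p) (h181 : 181 ≤ p) :
    ¬ HighlyComposite (d n) := by
  intro hm
  have hn0 : n ≠ 0 := hn.1.ne'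
  have hnp : p ≤ n := Nat.le_of_dvd hn.1 hpdvd
  -- all primes ≤ p divide n
  have hall : ∀ q : ℕ, q.Prime → q ≤ p → q ∣ n := fun q hq hqp =>
    dvd_of_prime_le hn hp hpdvd hq hqp
  set m := d n with hmdef
  have hdn : m = ∏ q ∈ n.primeFactors, (n.factorization q + 1) := Nat.card_divisors hn0
  -- lower bound on Om m
  have hcard_le : n.primeFactors.card ≤ Om m := by
    rw [hdn, Om_prod (fun i _ => by omega)]
    calc n.primeFactors.card = ∑ _q ∈ n.primeFactors, 1 := by simp
      _ ≤ ∑ q ∈ n.primeFactors, Om (n.factorization q + 1) := by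
          apply Finset.sum_le_sum
          intro q hq
          have h1 : 1 ≤ n.factorization q :=
            (Nat.prime_of_mem_primeFactors hq).factorization_pos_of_dvd hn0
              (Nat.dvd_of_mem_primeFactors hq)
          exact one_le_Om (by omega)
  -- m ≥ 2
  have hn2 : 2 ≤ n := le_trans (by omega) hnp
  have hm2 : 2 ≤ m := by
    have hsub : ({1, n} : Finset ℕ) ⊆ n.divisors := by
      intro x hx
      rcases Finset.mem_insert.1 hx with h | h
      · subst h; exact Nat.one_mem_divisors.2 hn0
      · rw [Finset.mem_singleton] at h; rw [h]; exact Nat.mem_divisors_self n hn0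
    calc 2 = ({1, n} : Finset ℕ).card := (Finset.card_pair (by omega)).symm
      _ ≤ n.divisors.card := Finset.card_le_card hsub
      _ = m := rfl
  have hmne : m.primeFactors.Nonempty := Nat.nonempty_primeFactors.2 (by omega)
  have hm0 : m ≠ 0 := by omega
  set Q := m.primeFactors.max' hmne with hQdef
  have hQmem : Q ∈ m.primeFactors := m.primeFactors.max'_mem hmne
  have hQprime : Q.Prime := Nat.prime_of_mem_primeFactors hQmem
  have hQle : ∀ q ∈ m.primeFactors, q ≤ Q := fun q hq => Finset.le_max' _ q hq
  -- Bertrand above Q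
  obtain ⟨P', hP', hQP', hP'2Q⟩ := Nat.exists_prime_lt_and_le_two_mul Q hQprime.pos.ne'
  have hP'nm : ¬ P' ∣ m := fun hdvd => by
    have := hQle P' (Nat.mem_primeFactors.2 ⟨hP', hdvd, hm0⟩); omega
  have hbq : ∀ q ∈ m.primeFactors, q ^ ((m.factorization q + 1) / 2) ≤ 2 * Q := by
    intro q hq
    exact le_trans (swap_bound hm (Nat.prime_of_mem_primeFactors hq)
      (Nat.dvd_of_mem_primeFactors hq) hP' hP'nm) hP'2Q
  -- t and the bound on Q
  set t := Nat.log 2 p with ht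
  have hp0 : p ≠ 0 := by omega
  have ht7 : 7 ≤ t := (Nat.le_log_iff_pow_le one_lt_two hp0).2 (by norm_num; omega)
  obtain ⟨P0, hP0, hpP0, hP02p⟩ := Nat.exists_prime_lt_and_le_two_mul p hp0
  have hP0n : ¬ P0 ∣ n := fun hdvd => by have := hmax P0 hP0 hdvd; omega
  have hplt : p < 2 ^ (t + 1) := Nat.lt_pow_succ_log_self one_lt_two p
  -- exponent bounds for n
  have hexpn : ∀ q ∈ n.primeFactors, n.factorization q + 1 ≤ 2 * t + 3 := by
    intro q hq
    have hqp : q.Prime := Nat.prime_of_mem_primeFactors hq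
    have h1 : q ^ ((n.factorization q + 1) / 2) ≤ 2 * p :=
      le_trans (swap_bound hn hqp (Nat.dvd_of_mem_primeFactors hq) hP0 hP0n) hP02p
    have h2 : 2 ^ ((n.factorization q + 1) / 2) ≤ 2 * p :=
      le_trans (Nat.pow_le_pow_left hqp.two_le _) h1
    have h3 : 2 * p < 2 ^ (t + 2) := by
      have h4 : 2 ^ (t + 2) = 2 * 2 ^ (t + 1) := by ring
      omega
    have h4 : (n.factorization q + 1) / 2 < t + 2 :=
      pow_lt_helper one_lt_two h2 h3
    omega
  have hQ2t : Q ≤ 2 * t + 3 := by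
    obtain ⟨q, hqmem, hQdvd⟩ := (Nat.Prime.prime hQprime).exists_mem_finset_dvd
      (hdn ▸ Nat.dvd_of_mem_primeFactors hQmem)
    have h5 := hexpn q hqmem
    have h6 := Nat.le_of_dvd (by omega) hQdvd
    omega
  -- exponent bound for m, in terms of t
  have hbq' : ∀ q ∈ m.primeFactors, q ^ ((m.factorization q + 1) / 2) ≤ 4 * t + 6 := by
    intro q hq
    exact le_trans (hbq q hq) (by omega)
  by_cases ht11 : t ≤ 11
  · -- small case : p < 2^12
    -- Om m ≤ 34
    have hf : ∀ q ∈ m.primeFactors, m.factorization q ≤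
        (if q = 2 then 10 else if q = 3 then 6 else if q ≤ 7 then 4 else 2) := by
      intro q hq
      have hqp : q.Prime := Nat.prime_of_mem_primeFactors hq
      have h50 : q ^ ((m.factorization q + 1) / 2) ≤ 50 :=
        le_trans (hbq' q hq) (by omega)
      by_cases h2 : q = 2
      · subst h2
        have hx : (m.factorization 2 + 1) / 2 < 6 := pow_lt_helper one_lt_two h50 (by norm_num)
        rw [if_pos rfl]
        omega
      by_cases h3 : q = 3
      · subst h3
        have hx : (m.factorization 3 + 1) / 2 < 4 :=
          pow_lt_helper (by norm_num) h50 (by norm_num)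
        rw [if_neg h2, if_pos rfl]
        omega
      by_cases h7 : q ≤ 7
      · have hq5 : 5 ≤ q := by
          have h2q := hqp.two_le
          interval_cases q <;> first | omega | (exact absurd hqp (by norm_num))
        have h125 : (50 : ℕ) < q ^ 3 :=
          lt_of_lt_of_le (by norm_num) (Nat.pow_le_pow_left hq5 3)
        have hx : (m.factorization q + 1) / 2 < 3 := pow_lt_helper hqp.one_lt h50 h125
        rw [if_neg h2, if_neg h3, if_pos h7]
        omega
      · have hq11 : 11 ≤ q := by
          have h2q := hqp.two_le
          have hq25 : q ≤ 25 := le_trans (hQle q hq) (by omega)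
          interval_cases q <;> first | omega | (exact absurd hqp (by norm_num))
        have h121 : (50 : ℕ) < q ^ 2 :=
          lt_of_lt_of_le (by norm_num) (Nat.pow_le_pow_left hq11 2)
        have hx : (m.factorization q + 1) / 2 < 2 := pow_lt_helper hqp.one_lt h50 h121
        rw [if_neg h2, if_neg h3, if_neg h7]
        omega
    have hsub : m.primeFactors ⊆ ({2, 3, 5, 7, 11, 13, 17, 19, 23} : Finset ℕ) := by
      intro q hq
      have hqp : q.Prime := Nat.prime_of_mem_primeFactors hq
      have hq25 : q ≤ 25 := le_trans (hQle q hq) (by omega)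
      have h2q := hqp.two_le
      interval_cases q <;> first | decide | (exact absurd hqp (by norm_num))
    have hOm34 : Om m ≤ 34 := by
      rw [Om_eq_sum]
      calc ∑ q ∈ m.primeFactors, m.factorization q
          ≤ ∑ q ∈ m.primeFactors,
            (if q = 2 then 10 else if q = 3 then 6 else if q ≤ 7 then 4 else 2) :=
            Finset.sum_le_sum hf
        _ ≤ ∑ q ∈ ({2, 3, 5, 7, 11, 13, 17, 19, 23} : Finset ℕ),
            (if q = 2 then 10 else if q = 3 then 6 else if q ≤ 7 then 4 else 2) :=
            Finset.sum_le_sum_of_subset hsub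
        _ = 34 := by decide
    -- 42 primes ≤ 181 all divide n
    have hE : ({2, 3, 5, 7, 11, 13, 17, 19, 23, 29, 31, 37, 41, 43, 47, 53, 59, 61,
        67, 71, 73, 79, 83, 89, 97, 101, 103, 107, 109, 113, 127, 131, 137, 139, 149, 151,
        157, 163, 167, 173, 179, 181} : Finset ℕ) ⊆ n.primeFactors := by
      intro q hq
      fin_cases hq <;>
        exact Nat.mem_primeFactors.2 ⟨by norm_num, hall _ (by norm_num) (by omega), hn0⟩
    have h42 : 42 ≤ n.primeFactors.card := by
      have h43 := Finset.card_le_card hE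
      simpa using h43
    omega
  · -- large case : t ≥ 12
    push_neg at ht11
    have ht12 : 12 ≤ t := ht11
    set L := Nat.log 2 (4 * t + 6) with hL
    have hOmL : Om m ≤ (2 * t + 4) * (2 * L) := by
      rw [Om_eq_sum]
      have hterm : ∀ q ∈ m.primeFactors, m.factorization q ≤ 2 * L := by
        intro q hq
        have hqp : q.Prime := Nat.prime_of_mem_primeFactors hq
        have hk : (m.factorization q + 1) / 2 ≤ Nat.log q (4 * t + 6) :=
          (Nat.le_log_iff_pow_le hqp.one_lt (by omega)).2 (hbq' q hq)
        have hmono : Nat.log q (4 * t + 6) ≤ L := Nat.log_anti_left one_lt_two hqp.two_le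
        omega
      calc ∑ q ∈ m.primeFactors, m.factorization q
          ≤ ∑ _q ∈ m.primeFactors, 2 * L := Finset.sum_le_sum hterm
        _ = m.primeFactors.card * (2 * L) := by rw [Finset.sum_const, smul_eq_mul]
        _ ≤ (2 * t + 4) * (2 * L) := by
            apply Nat.mul_le_mul_right
            calc m.primeFactors.card ≤ (Finset.range (2 * t + 4)).card := by
                  apply Finset.card_le_card
                  intro q hq
                  have := hQle q hq
                  exact Finset.mem_range.2 (by omega)
              _ = 2 * t + 4 := Finset.card_range _
    -- Chebyshev bound
    set N := 2 ^ (t - 1) with hN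
    have h2N : 2 * N = 2 ^ t := by
      rw [hN, ← pow_succ']
      congr 1
      omega
    have hN4 : 4 ≤ N := by
      calc (4 : ℕ) = 2 ^ 2 := by norm_num
        _ ≤ 2 ^ (t - 1) := Nat.pow_le_pow_right (by norm_num) (by omega)
    have hcb := Nat.four_pow_lt_mul_centralBinom N hN4
    have hcb0 : N.centralBinom ≠ 0 := Nat.centralBinom_ne_zero N
    have hsubn : N.centralBinom.primeFactors ⊆ n.primeFactors := by
      intro q hq
      have hqp : q.Prime := Nat.prime_of_mem_primeFactors hq
      have hv1 : 1 ≤ N.centralBinom.factorization q :=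
        hqp.factorization_pos_of_dvd hcb0 (Nat.dvd_of_mem_primeFactors hq)
      have hle : q ^ N.centralBinom.factorization q ≤ 2 * N := by
        rw [Nat.centralBinom_eq_two_mul_choose]
        exact Nat.pow_factorization_choose_le (by positivity)
      have hq2N : q ≤ 2 * N :=
        le_trans (Nat.le_self_pow (by omega) q) hle
      have hqp' : q ≤ p := by
        have h2tp : 2 ^ t ≤ p := Nat.pow_log_le_self 2 hp0
        omega
      exact Nat.mem_primeFactors.2 ⟨hqp, hall q hqp hqp', hn0⟩
    set cn := n.primeFactors.card with hcn
    have hcble : N.centralBinom ≤ (2 * N) ^ cn := by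
      calc N.centralBinom
          = ∏ q ∈ N.centralBinom.primeFactors, q ^ N.centralBinom.factorization q := by
            conv_lhs => rw [← Nat.factorization_prod_pow_eq_self hcb0]
            rfl
        _ ≤ ∏ _q ∈ N.centralBinom.primeFactors, 2 * N := by
            apply Finset.prod_le_prod'
            intro q _
            rw [Nat.centralBinom_eq_two_mul_choose]
            exact Nat.pow_factorization_choose_le (by positivity)
        _ = (2 * N) ^ N.centralBinom.primeFactors.card := by
            rw [Finset.prod_const]
        _ ≤ (2 * N) ^ cn := by
            apply Nat.pow_le_pow_right (by positivity)
            exact Finset.card_le_card hsubn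
    have hkey : 2 ^ (2 ^ t) < 2 ^ (t * (cn + 1)) := by
      calc 2 ^ (2 ^ t) = 4 ^ N := by
            rw [show (4 : ℕ) = 2 ^ 2 by norm_num, ← pow_mul, ← h2N]
        _ < N * N.centralBinom := hcb
        _ ≤ N * (2 * N) ^ cn := Nat.mul_le_mul_left N hcble
        _ = 2 ^ (t - 1) * (2 ^ t) ^ cn := by rw [← hN, h2N]
        _ = 2 ^ (t - 1 + t * cn) := by rw [← pow_mul, ← pow_add]
        _ ≤ 2 ^ (t * (cn + 1)) := Nat.pow_le_pow_right (by norm_num) (by nlinarith [Nat.sub_le t 1])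
    have h2t : 2 ^ t < t * (cn + 1) :=
      (Nat.pow_lt_pow_iff_right one_lt_two).1 hkey
    have hcnOm : cn ≤ Om m := hcard_le
    have hfinal := numeric_large t ht12
    rw [← hL] at hfinal
    have hc1 : cn + 1 ≤ (2 * t + 4) * (2 * L) + 1 := by omega
    have hc2 : t * (cn + 1) ≤ t * ((2 * t + 4) * (2 * L) + 1) :=
      Nat.mul_le_mul_left t hc1
    omega
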